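/- Let K, K₀ ≥ 0 and let f : [0,1] → ℝ be continuous with f ≤ 0 on [0,1], twice differentiable on a relatively open neighbourhood N in [0,1] of its zero set {t ∈ [0,1] : f(t) = 0}, and satisfying the differential inequality f″(t) ≥ −K|f′(t)| − K₀|f(t)| for all t ∈ N. If there exists t̂ ∈ [0,1) with f(t̂) = 0 and f′(t̂) = 0 (the derivative one-sided if t̂ = 0), then f ≡ 0 on [0,1]. -/

import Mathlib

open Set MeasureTheory Metric
open scoped InnerProductSpace NNReal ENNReal

noncomputable section

/-- Euclidean `n`-space. -/
abbrev Euc (n : ℕ) := EuclideanSpace ℝ (Fin n)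

/-- The Hessian of a scalar function, as a continuous linear endomorphism. -/
def hess {n : ℕ} (u : Euc n → ℝ) (x : Euc n) : Euc n →L[ℝ] Euc n :=
  fderiv ℝ (gradient u) x

/-- `C^{1,1}` regularity on a set: differentiable with locally Lipschitz derivative. -/
def C11On {n : ℕ} (f : Euc n → ℝ) (Ω : Set (Euc n)) : Prop :=
  DifferentiableOn ℝ f Ω ∧
    ∀ x ∈ Ω, ∃ s ∈ nhdsWithin x Ω, ∃ C : ℝ≥0, LipschitzOnWith C (fderiv ℝ f) s

/-- A density bounded above and below by positive constants (`f, 1/f ∈ L^∞`). -/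
def BddDensity {n : ℕ} (f : Euc n → ℝ) (Ω : Set (Euc n)) : Prop :=
  ∃ c C : ℝ, 0 < c ∧ ∀ x ∈ Ω, f x ∈ Icc c C

/-- The (Fréchet) subdifferential of `u` at `x₀`. -/
def subdiff {n : ℕ} (u : Euc n → ℝ) (x₀ : Euc n) : Set (Euc n) :=
  {p | ∀ ε > 0, ∀ᶠ x in nhds x₀, u x₀ + ⟪p, x - x₀⟫_ℝ - ε * ‖x - x₀‖ ≤ u x}

/-- The setting of a generating function `g` on a domain `Γ ⊆ ℝⁿ×ℝⁿ×ℝ`, together with the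
mappings `Y`, `Z` (defined by `g_x(x,Y,Z) = p`, `g(x,Y,Z) = u`) and the dual generating
function `g*` (defined by `g(x,y,g*(x,y,u)) = u`). -/
structure GenSetting (n : ℕ) where
  Γ : Set (Euc n × Euc n × ℝ)
  g : Euc n → Euc n → ℝ → ℝ
  Y : Euc n → ℝ → Euc n → Euc n
  Z : Euc n → ℝ → Euc n → ℝ
  gstar : Euc n → Euc n → ℝ → ℝ

namespace GenSetting

variable {n : ℕ} (S : GenSetting n)

/-- `g_x`, the gradient of `g` in the `x` variable. -/
def gx (x y : Euc n) (z : ℝ) : Euc n := gradient (fun x' => S.g x' y z) x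

/-- `g_y`, the gradient of `g` in the `y` variable. -/
def gy (x y : Euc n) (z : ℝ) : Euc n := gradient (fun y' => S.g x y' z) y

/-- `g_z`. -/
def gz (x y : Euc n) (z : ℝ) : ℝ := deriv (fun z' => S.g x y z') z

/-- `g_{xz}`. -/
def gxz (x y : Euc n) (z : ℝ) : Euc n := deriv (fun z' => S.gx x y z') z

/-- `g_{xx}`, the Hessian of `g` in `x`. -/
def gxx (x y : Euc n) (z : ℝ) : Euc n →L[ℝ] Euc n :=
  fderiv ℝ (fun x' => S.gx x' y z) x

/-- `Q = -g_y/g_z`. -/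
def Q (x y : Euc n) (z : ℝ) : Euc n := (-(S.gz x y z)⁻¹) • S.gy x y z

/-- The interval `I(x,y) = {z | (x,y,z) ∈ Γ}`. -/
def Ix (x y : Euc n) : Set ℝ := {z | (x, y, z) ∈ S.Γ}

/-- `I(Ω,y) = ⋂_{x ∈ Ω} I(x,y)`. -/
def IΩ (Ω : Set (Euc n)) (y : Euc n) : Set ℝ := ⋂ x ∈ Ω, S.Ix x y

/-- `J(x,y) = g(x,y,·)(I(x,y))`. -/
def Jxy (x y : Euc n) : Set ℝ := (S.g x y) '' S.Ix x y

/-- `J(Ω,Ω') = ⋂_{x ∈ Ω, y ∈ Ω'} J(x,y)`. -/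
def JΩ (Ω Ω' : Set (Euc n)) : Set ℝ := ⋂ x ∈ Ω, ⋂ y ∈ Ω', S.Jxy x y

/-- `J(x,Ω') = ⋂_{y ∈ Ω'} J(x,y)`. -/
def Jpt (x : Euc n) (Ω' : Set (Euc n)) : Set ℝ := ⋂ y ∈ Ω', S.Jxy x y

/-- The slice `Γ_x`. -/
def Γx (x : Euc n) : Set (Euc n × ℝ) := {yz | (x, yz.1, yz.2) ∈ S.Γ}

/-- The slice `Γ_{y,z}`. -/
def Γyz (y : Euc n) (z : ℝ) : Set (Euc n) := {x | (x, y, z) ∈ S.Γ}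

/-- The dual domain `Γ* = {(x,y,u) | u ∈ J(x,y)}`. -/
def Γstar : Set (Euc n × Euc n × ℝ) := {q | q.2.2 ∈ S.Jxy q.1 q.2.1}

/-- `P(x,y,u) = g_x(x,y,g*(x,y,u))`. -/
def Pmap (x y : Euc n) (u : ℝ) : Euc n := S.gx x y (S.gstar x y u)

/-- The matrix `E = g_{xy} - (g_z)⁻¹ g_{xz} ⊗ g_y`, as a linear map acting on
increments of `y`. -/
def Emat (x y : Euc n) (z : ℝ) : Euc n →L[ℝ] Euc n :=
  fderiv ℝ (fun y' => S.gx x y' z) y -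
    (S.gz x y z)⁻¹ • (innerSL ℝ (S.gy x y z)).smulRight (S.gxz x y z)

/-- The set `𝒰` of one-jets generated by `Γ`. -/
def Uset : Set (Euc n × ℝ × Euc n) :=
  {q | ∃ x y z, (x, y, z) ∈ S.Γ ∧ q = (x, S.g x y z, S.gx x y z)}

/-- The matrix `A(x,u,p) = g_{xx}(x,Y(x,u,p),Z(x,u,p))`. -/
def Amat (x : Euc n) (u : ℝ) (p : Euc n) : Euc n →L[ℝ] Euc n :=
  S.gxx x (S.Y x u p) (S.Z x u p)

/-- The quadratic form `A_{ij}(x,u,p) ξ_i ξ_j`. -/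
def Aform (x : Euc n) (u : ℝ) (p ξ : Euc n) : ℝ := ⟪S.Amat x u p ξ, ξ⟫_ℝ

/-- The dual matrix `A*`: the Hessian in `y` of `g*(x,·,w)`. -/
def Astar (x y : Euc n) (w : ℝ) : Euc n →L[ℝ] Euc n :=
  fderiv ℝ (fun y' => gradient (fun y'' => S.gstar x y'' w) y') y

/-- Structural conditions: `Γ` is open, `g` is `C⁴` on `Γ` with `g_z < 0`, each
`I(x,y)` is an interval, and `Y`, `Z`, `g*` satisfy their defining equations. -/
def IsGenerating : Prop :=
  IsOpen S.Γ ∧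
  ContDiffOn ℝ 4 (fun q : Euc n × Euc n × ℝ => S.g q.1 q.2.1 q.2.2) S.Γ ∧
  (∀ x y : Euc n, (S.Ix x y).OrdConnected) ∧
  (∀ q ∈ S.Γ, S.gz q.1 q.2.1 q.2.2 < 0) ∧
  (∀ q ∈ S.Γ, S.Y q.1 (S.g q.1 q.2.1 q.2.2) (S.gx q.1 q.2.1 q.2.2) = q.2.1 ∧
              S.Z q.1 (S.g q.1 q.2.1 q.2.2) (S.gx q.1 q.2.1 q.2.2) = q.2.2) ∧
  (∀ x y : Euc n, ∀ u ∈ S.Jxy x y, S.gstar x y u ∈ S.Ix x y ∧ S.g x y (S.gstar x y u) = u)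

/-- Condition A1. -/
def A1 : Prop := ∀ x : Euc n,
  InjOn (fun yz : Euc n × ℝ => (S.gx x yz.1 yz.2, S.g x yz.1 yz.2)) (S.Γx x)

/-- Condition A1*. -/
def A1star : Prop := ∀ (y : Euc n) (z : ℝ), InjOn (fun x => S.Q x y z) (S.Γyz y z)

/-- Condition A2. -/
def A2 : Prop := ∀ q ∈ S.Γ, (S.Emat q.1 q.2.1 q.2.2).toLinearMap.det ≠ 0

/-- Condition A3w: codimension-one convexity of `A` in `p`. -/
def A3w : Prop := ∀ q ∈ S.Uset, ∀ ξ η : Euc n, ⟪ξ, η⟫_ℝ = 0 →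
  0 ≤ iteratedFDeriv ℝ 2 (fun p => S.Aform q.1 q.2.1 p ξ) q.2.2 ![η, η]

/-- Condition A3: strict codimension-one convexity of `A` in `p`. -/
def A3 : Prop := ∀ q ∈ S.Uset, ∀ ξ η : Euc n, ξ ≠ 0 → η ≠ 0 → ⟪ξ, η⟫_ℝ = 0 →
  0 < iteratedFDeriv ℝ 2 (fun p => S.Aform q.1 q.2.1 p ξ) q.2.2 ![η, η]

/-- `g(·,y₀,z₀)` is a `g`-support of `u` (over `Ω`) at `x₀`. -/
def IsGSupport (Ω : Set (Euc n)) (u : Euc n → ℝ) (y₀ : Euc n) (z₀ : ℝ) (x₀ : Euc n) : Prop :=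
  z₀ ∈ S.IΩ Ω y₀ ∧ u x₀ = S.g x₀ y₀ z₀ ∧ ∀ x ∈ Ω, S.g x y₀ z₀ ≤ u x

/-- `u` is `g`-convex on `Ω`. -/
def IsGConvexOn (Ω : Set (Euc n)) (u : Euc n → ℝ) : Prop :=
  ∀ x₀ ∈ Ω, ∃ y₀ z₀, S.IsGSupport Ω u y₀ z₀ x₀

/-- `u` is strictly `g`-convex at `x₀`. -/
def IsStrictlyGConvexAt (Ω : Set (Euc n)) (u : Euc n → ℝ) (x₀ : Euc n) : Prop :=
  ∃ y₀ z₀, S.IsGSupport Ω u y₀ z₀ x₀ ∧ ∀ x ∈ Ω, x ≠ x₀ → S.g x y₀ z₀ < u x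

/-- `u` is strictly `g`-convex on `Ω`. -/
def IsStrictlyGConvexOn (Ω : Set (Euc n)) (u : Euc n → ℝ) : Prop :=
  ∀ x₀ ∈ Ω, S.IsStrictlyGConvexAt Ω u x₀

/-- The `g`-normal mapping (set-valued) of a `g`-convex function. -/
def Tset (Ω : Set (Euc n)) (u : Euc n → ℝ) (x₀ : Euc n) : Set (Euc n) :=
  {y₀ | u x₀ ∈ S.Jxy x₀ y₀ ∧ Ω ⊆ S.Γyz y₀ (S.gstar x₀ y₀ (u x₀)) ∧
        ∀ x ∈ Ω, S.g x y₀ (S.gstar x₀ y₀ (u x₀)) ≤ u x}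

/-- The image of a set under the `g`-normal mapping. -/
def TsetImage (Ω : Set (Euc n)) (u : Euc n → ℝ) (E : Set (Euc n)) : Set (Euc n) :=
  ⋃ x ∈ E, S.Tset Ω u x

/-- The (single-valued) mapping `Tu = Y(·,u,Du)` for differentiable `u`. -/
def Tpt (u : Euc n → ℝ) (x : Euc n) : Euc n := S.Y x (u x) (gradient u x)

/-- `Σ₀ = Y(x₀,u(x₀),∂u(x₀))`. -/
def Sigma0 (u : Euc n → ℝ) (x₀ : Euc n) : Set (Euc n) :=
  (fun p => S.Y x₀ (u x₀) p) '' subdiff u x₀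

/-- `u ∈ C²` is locally `g`-convex on `Ω`: its one-jet lies in `𝒰` and
`D²u - A(·,u,Du) ≥ 0`. -/
def IsLocallyGConvexOn (Ω : Set (Euc n)) (u : Euc n → ℝ) : Prop :=
  (∀ x ∈ Ω, (x, u x, gradient u x) ∈ S.Uset) ∧
  ∀ x ∈ Ω, ∀ ξ : Euc n, 0 ≤ ⟪(hess u x - S.Amat x (u x) (gradient u x)) ξ, ξ⟫_ℝ

/-- `Ω` is `g`-convex with respect to `(y₀,z₀)`. -/
def GConvexWrt (Ω : Set (Euc n)) (y₀ : Euc n) (z₀ : ℝ) : Prop :=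
  Convex ℝ ((fun x => S.Q x y₀ z₀) '' Ω)

/-- The image `Q(Γ)`. -/
def QΓ : Set (Euc n) := (fun q : Euc n × Euc n × ℝ => S.Q q.1 q.2.1 q.2.2) '' S.Γ

/-- `Ω` is sub `g`-convex with respect to `(y₀,z₀)`. -/
def SubGConvexWrt (Ω : Set (Euc n)) (y₀ : Euc n) (z₀ : ℝ) : Prop :=
  convexHull ℝ ((fun x => S.Q x y₀ z₀) '' Ω) ⊆ S.QΓ

/-- `Ω*` is `g*`-convex with respect to `(x₀,u₀)`. -/
def GstarConvexWrt (Ωs : Set (Euc n)) (x₀ : Euc n) (u₀ : ℝ) : Prop :=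
  Convex ℝ ((fun y => S.Pmap x₀ y u₀) '' Ωs)

/-- The image `P(Γ*)`. -/
def PΓstar : Set (Euc n) :=
  (fun q : Euc n × Euc n × ℝ => S.Pmap q.1 q.2.1 q.2.2) '' S.Γstar

/-- `Ω*` is sub `g*`-convex with respect to `(x₀,u₀)`. -/
def SubGstarConvexWrt (Ωs : Set (Euc n)) (x₀ : Euc n) (u₀ : ℝ) : Prop :=
  convexHull ℝ ((fun y => S.Pmap x₀ y u₀) '' Ωs) ⊆ S.PΓstar

/-- `Ω*` is `g*`-convex with respect to a function `u` on `Ω`. -/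
def GstarConvexWrtFn (Ωs Ω : Set (Euc n)) (u : Euc n → ℝ) : Prop :=
  ∀ x ∈ Ω, S.GstarConvexWrt Ωs x (u x)

/-- `Ω*` is sub `g*`-convex with respect to a function `u` on `Ω`. -/
def SubGstarConvexWrtFn (Ωs Ω : Set (Euc n)) (u : Euc n → ℝ) : Prop :=
  ∀ x ∈ Ω, S.SubGstarConvexWrt Ωs x (u x)

/-- `Ω` is sub `g`-convex in `U` with respect to `(y₀,z₀)`. -/
def SubGConvexIn (Ω U : Set (Euc n)) (y₀ : Euc n) (z₀ : ℝ) : Prop :=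
  z₀ ∈ S.IΩ U y₀ ∧
  convexHull ℝ ((fun x => S.Q x y₀ z₀) '' Ω) ⊆ (fun x => S.Q x y₀ z₀) '' U

/-- `Ω*` is sub `g*`-convex in `V` with respect to `(x₀,u₀)`. -/
def SubGstarConvexIn (Ωs V : Set (Euc n)) (x₀ : Euc n) (u₀ : ℝ) : Prop :=
  u₀ ∈ S.Jpt x₀ V ∧
  convexHull ℝ ((fun y => S.Pmap x₀ y u₀) '' Ωs) ⊆ (fun y => S.Pmap x₀ y u₀) '' V

/-- `u` is an elliptic function on `Ω`: `D²u - A(·,u,Du) > 0`. -/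
def IsEllipticOn (u : Euc n → ℝ) (Ω : Set (Euc n)) : Prop :=
  ∀ x ∈ Ω, ∀ ξ : Euc n, ξ ≠ 0 →
    0 < ⟪(hess u x - S.Amat x (u x) (gradient u x)) ξ, ξ⟫_ℝ

/-- The right-hand side `B(x,u,p) = det E(x,Y,Z) · f(x)/f*(Y(x,u,p))`. -/
def Bfn (f fstar : Euc n → ℝ) (x : Euc n) (u : ℝ) (p : Euc n) : ℝ :=
  (S.Emat x (S.Y x u p) (S.Z x u p)).toLinearMap.det * f x / fstar (S.Y x u p)

/-- `u` solves the Monge–Ampère type equation `det[D²u - A(·,u,Du)] = B(·,u,Du)` on `Ω`. -/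
def SolvesMATE (u : Euc n → ℝ) (Ω : Set (Euc n)) (B : Euc n → ℝ → Euc n → ℝ) : Prop :=
  ∀ x ∈ Ω, (hess u x - S.Amat x (u x) (gradient u x)).toLinearMap.det
    = B x (u x) (gradient u x)

/-- `u` is a generalized solution of the second boundary value problem:
`u` is `g`-convex and `μ[u] = f dx`, i.e. `∫_{Tu(E)} f* = ∫_E f` for Borel `E ⊆ Ω`
(with `f*` extended to vanish outside `Ω*`). -/
def IsGeneralizedSolution (Ω Ωs : Set (Euc n)) (u f fstar : Euc n → ℝ) : Prop :=
  S.IsGConvexOn Ω u ∧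
  ∀ E : Set (Euc n), MeasurableSet E → E ⊆ Ω →
    ∫ y in S.TsetImage Ω u E ∩ Ωs, fstar y = ∫ x in E, f x

/-- The `g`-transform `v = u*_g`, `v(y) = sup_{x ∈ Ω} g*(x,y,u(x))`. -/
def gTransform (Ω : Set (Euc n)) (u : Euc n → ℝ) (y : Euc n) : ℝ :=
  sSup ((fun x => S.gstar x y (u x)) '' Ω)

/-- Condition A5 (relative to `J₀ = (m₀,M₀)` and the constant `K₀`). -/
def A5 (Ω Ωs : Set (Euc n)) (m₀ M₀ K₀ : ℝ) : Prop :=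
  0 < K₀ ∧ K₀ < (M₀ - m₀) / (2 * diam Ω) ∧
  ∀ x ∈ closure Ω, ∀ y ∈ closure Ωs, ∀ z : ℝ, (x, y, z) ∈ S.Γ →
    S.g x y z ∈ Ioo m₀ M₀ → ‖S.gx x y z‖ ≤ K₀

/-- The compatibility condition `U × V × g*(U × V × J(U,V)) ⊆ Γ`. -/
def UVCompat (U V : Set (Euc n)) : Prop :=
  ∀ x ∈ U, ∀ y ∈ V, ∀ x' ∈ U, ∀ y' ∈ V, ∀ u ∈ S.JΩ U V, (x, y, S.gstar x' y' u) ∈ S.Γ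

/-- `v = u*_g` is an elliptic solution of the dual boundary value problem
(relative to the classical solution `u` of the original problem). -/
def IsDualEllipticSolution (Ω Ωs : Set (Euc n)) (u v f fstar : Euc n → ℝ) : Prop :=
  ContDiffOn ℝ 3 v Ωs ∧
  ∀ x ∈ Ω, ∀ y : Euc n, y = S.Tpt u x →
    (∀ ξ : Euc n, ξ ≠ 0 → 0 < ⟪(hess v y - S.Astar x y (u x)) ξ, ξ⟫_ℝ) ∧
    (hess v y - S.Astar x y (u x)).toLinearMap.det =
      (S.Emat x y (S.gstar x y (u x))).toLinearMap.det * fstar y / f x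

end GenSetting

lemma core_smp (K K₀ : ℝ) (hK : 0 ≤ K) (hK₀ : 0 ≤ K₀) (f : ℝ → ℝ)
    (a b c : ℝ) (hab : a < b) (hc : c ∈ Icc a b)
    (hsub : Icc a b ⊆ Icc (0:ℝ) 1)
    (hfc : ContinuousOn f (Icc 0 1))
    (hle : ∀ t ∈ Icc (0:ℝ) 1, f t ≤ 0)
    (hd1 : ∀ t ∈ Icc a b, DifferentiableWithinAt ℝ f (Icc 0 1) t)
    (hd2 : ∀ t ∈ Icc a b, DifferentiableWithinAt ℝ (derivWithin f (Icc 0 1)) (Icc 0 1) t)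
    (hineq : ∀ t ∈ Icc a b, -K * |derivWithin f (Icc 0 1) t| - K₀ * |f t| ≤
        derivWithin (derivWithin f (Icc 0 1)) (Icc 0 1) t)
    (hfc0 : f c = 0) (hDc : derivWithin f (Icc 0 1) c = 0) :
    ∀ t ∈ Icc a b, f t = 0 := by
  set D : ℝ → ℝ := derivWithin f (Icc 0 1) with hD
  set D2 : ℝ → ℝ := derivWithin D (Icc 0 1) with hD2
  set M : ℝ := K ^ 2 / 4 + K₀ with hM
  have hMnn : 0 ≤ M := by positivity
  -- facts about interior points
  have hint : ∀ t ∈ Ioo a b, Icc (0:ℝ) 1 ∈ nhds t := by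
    intro t ht
    have h0 : (0:ℝ) ≤ a := (hsub ⟨le_refl a, hab.le⟩).1
    have h1 : b ≤ 1 := (hsub ⟨hab.le, le_refl b⟩).2
    exact Icc_mem_nhds (lt_of_le_of_lt h0 ht.1) (lt_of_lt_of_le ht.2 h1)
  have hfD : ∀ t ∈ Ioo a b, HasDerivAt f (D t) t := by
    intro t ht
    have hmem := hint t ht
    have := ((hd1 t (Ioo_subset_Icc_self ht)).differentiableAt hmem).hasDerivAt
    rwa [hD, derivWithin_of_mem_nhds hmem]
  have hDD : ∀ t ∈ Ioo a b, HasDerivAt D (D2 t) t := by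
    intro t ht
    have hmem := hint t ht
    have := ((hd2 t (Ioo_subset_Icc_self ht)).differentiableAt hmem).hasDerivAt
    rwa [hD2, derivWithin_of_mem_nhds hmem]
  have key : ∀ ε : ℝ, 0 < ε → ∀ t ∈ Icc a b,
      ε - f t ≤ ε * Real.exp (M / 2 * (t - c) ^ 2) := by
    intro ε hε t ht
    have hpos : ∀ s ∈ Icc a b, 0 < ε - f s := fun s hs => by
      have := hle s (hsub hs); linarith
    set W : ℝ → ℝ := fun s => M * (s - c) + D s / (ε - f s) with hWdef
    set w : ℝ → ℝ := fun s => Real.log ε + M / 2 * (s - c) ^ 2 - Real.log (ε - f s) with hwdef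
    have hfcont : ContinuousOn f (Icc a b) := hfc.mono hsub
    have hDcont : ContinuousOn D (Icc a b) := fun s hs =>
      ((hd2 s hs).continuousWithinAt).mono hsub
    have hWcont : ContinuousOn W (Icc a b) := by
      apply ContinuousOn.add
      · exact (continuousOn_const.mul (continuousOn_id.sub continuousOn_const))
      · exact hDcont.div (continuousOn_const.sub hfcont) fun s hs => (hpos s hs).ne'
    have hwcont : ContinuousOn w (Icc a b) := by
      apply ContinuousOn.sub
      · exact continuousOn_const.add (continuousOn_const.mul
          ((continuousOn_id.sub continuousOn_const).pow 2))
      · exact (continuousOn_const.sub hfcont).log fun s hs => (hpos s hs).ne'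
    -- derivative of W at interior points
    have hWderiv : ∀ t ∈ Ioo a b, HasDerivAt W
        (M + (D2 t * (ε - f t) + D t ^ 2) / (ε - f t) ^ 2) t := by
      intro t ht
      have he := hpos t (Ioo_subset_Icc_self ht)
      have h1 : HasDerivAt (fun s => M * (s - c)) (M * 1) t :=
        ((hasDerivAt_id t).sub_const c).const_mul M
      have h2 : HasDerivAt (fun s => ε - f s) (0 - D t) t :=
        (hasDerivAt_const t ε).sub (hfD t ht)
      have h3 : HasDerivAt (fun s => D s / (ε - f s))
          ((D2 t * (ε - f t) - D t * (0 - D t)) / (ε - f t) ^ 2) t :=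
        (hDD t ht).div h2 he.ne'
      have := h1.add h3
      refine this.congr_deriv ?_
      ring
    have hWnonneg : ∀ t ∈ Ioo a b,
        0 ≤ M + (D2 t * (ε - f t) + D t ^ 2) / (ε - f t) ^ 2 := by
      intro t ht
      have ht' := Ioo_subset_Icc_self ht
      have he := hpos t ht'
      have hfle := hle t (hsub ht')
      have h1 : -K * |D t| - K₀ * (-(f t)) ≤ D2 t := by
        have := hineq t ht'
        rwa [abs_of_nonpos hfle] at this
      have h2 : (-K * |D t| - K₀ * (-(f t))) * (ε - f t) ≤ D2 t * (ε - f t) :=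
        mul_le_mul_of_nonneg_right h1 he.le
      have hkey0 : 0 ≤ (K ^ 2 / 4 + K₀) * (ε - f t) ^ 2 + D2 t * (ε - f t) + D t ^ 2 := by
        nlinarith [sq_nonneg (K * (ε - f t) / 2 - |D t|), sq_abs (D t),
          mul_nonneg (mul_nonneg hK₀ he.le) hε.le]
      have hkey : 0 ≤ M * (ε - f t) ^ 2 + D2 t * (ε - f t) + D t ^ 2 := by
        rw [hM]; exact hkey0
      have : M + (D2 t * (ε - f t) + D t ^ 2) / (ε - f t) ^ 2
          = (M * (ε - f t) ^ 2 + (D2 t * (ε - f t) + D t ^ 2)) / (ε - f t) ^ 2 := by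
        field_simp
      rw [this]
      apply div_nonneg _ (sq_nonneg _)
      linarith
    have hWdiff : DifferentiableOn ℝ W (interior (Icc a b)) := by
      rw [interior_Icc]
      exact fun t ht => ((hWderiv t ht).differentiableAt).differentiableWithinAt
    have hWmono : MonotoneOn W (Icc a b) := by
      apply monotoneOn_of_deriv_nonneg (convex_Icc a b) hWcont hWdiff
      intro t ht
      rw [interior_Icc] at ht
      rw [(hWderiv t ht).deriv]
      exact hWnonneg t ht
    have hWc : W c = 0 := by simp [hWdef, hfc0, hDc]
    -- derivative of w at interior points is W
    have hwderiv : ∀ t ∈ Ioo a b, HasDerivAt w (W t) t := by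
      intro t ht
      have he := hpos t (Ioo_subset_Icc_self ht)
      have h2 : HasDerivAt (fun s => ε - f s) (0 - D t) t :=
        (hasDerivAt_const t ε).sub (hfD t ht)
      have h3 : HasDerivAt (fun s => Real.log (ε - f s)) ((0 - D t) / (ε - f t)) t :=
        h2.log he.ne'
      have h1 : HasDerivAt (fun s => Real.log ε + M / 2 * (s - c) ^ 2)
          (M / 2 * (2 * (t - c) ^ 1 * 1)) t := by
        exact (((hasDerivAt_id t).sub_const c).pow 2).const_mul (M / 2) |>.const_add (Real.log ε)
      have := h1.sub h3
      refine this.congr_deriv ?_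
      show _ = M * (t - c) + D t / (ε - f t)
      ring
    have hwc : w c = 0 := by simp [hwdef, hfc0]
    have hwt : 0 ≤ w t := by
      rcases le_total t c with htc | htc
      · -- antitone on [a,c]
        rcases eq_or_lt_of_le htc with h | h
        · rw [h]; exact hwc.ge
        have hanti : AntitoneOn w (Icc a c) := by
          apply antitoneOn_of_deriv_nonpos (convex_Icc a c)
            (hwcont.mono (Icc_subset_Icc le_rfl hc.2))
          · rw [interior_Icc]
            intro s hs
            have hs' : s ∈ Ioo a b := ⟨hs.1, lt_of_lt_of_le hs.2 hc.2⟩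
            exact ((hwderiv s hs').differentiableAt).differentiableWithinAt
          · rw [interior_Icc]
            intro s hs
            have hs' : s ∈ Ioo a b := ⟨hs.1, lt_of_lt_of_le hs.2 hc.2⟩
            rw [(hwderiv s hs').deriv]
            have := hWmono (Ioo_subset_Icc_self hs') hc hs.2.le
            rw [hWc] at this
            exact this
        have := hanti ⟨ht.1, htc⟩ ⟨(le_trans ht.1 htc : a ≤ c), le_rfl⟩ htc
        rw [hwc] at this
        exact this
      · rcases eq_or_lt_of_le htc with h | h
        · rw [← h]; exact hwc.ge
        have hmono : MonotoneOn w (Icc c b) := by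
          apply monotoneOn_of_deriv_nonneg (convex_Icc c b)
            (hwcont.mono (Icc_subset_Icc hc.1 le_rfl))
          · rw [interior_Icc]
            intro s hs
            have hs' : s ∈ Ioo a b := ⟨lt_of_le_of_lt hc.1 hs.1, hs.2⟩
            exact ((hwderiv s hs').differentiableAt).differentiableWithinAt
          · rw [interior_Icc]
            intro s hs
            have hs' : s ∈ Ioo a b := ⟨lt_of_le_of_lt hc.1 hs.1, hs.2⟩
            rw [(hwderiv s hs').deriv]
            have := hWmono hc (Ioo_subset_Icc_self hs') hs.1.le
            rw [hWc] at this
            exact this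
        have := hmono ⟨le_rfl, (le_trans htc ht.2 : c ≤ b)⟩ ⟨htc, ht.2⟩ htc
        rw [hwc] at this
        exact this
    -- unfold w t ≥ 0
    have hlog : Real.log (ε - f t) ≤ Real.log ε + M / 2 * (t - c) ^ 2 := by
      simp only [hwdef] at hwt; linarith
    have := Real.exp_le_exp.2 hlog
    rwa [Real.exp_log (hpos t ht), Real.exp_add, Real.exp_log hε] at this
  -- let ε → 0
  intro t ht
  set C : ℝ := Real.exp (M / 2 * (t - c) ^ 2) with hC
  have hC1 : 1 ≤ C := Real.one_le_exp (by positivity)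
  have hnn : -f t ≤ 0 := by
    by_contra hcon
    push_neg at hcon
    set x : ℝ := -f t with hx
    have hx0 : 0 < x := hcon
    have hε : 0 < x / (2 * C) := by positivity
    have hCpos : 0 < C := lt_of_lt_of_le one_pos hC1
    have hthis := key (x / (2 * C)) hε t ht
    have hid : x / (2 * C) * C = x / 2 := by field_simp
    rw [hid] at hthis
    have hfx : f t = -x := by simp [hx]
    rw [hfx] at hthis
    linarith
  have := hle t (hsub ht)
  linarith


/-- The one-dimensional strong maximum principle for the differential inequality
`f'' ≥ -K|f'| - K₀|f|`: a nonpositive function vanishing to first order at a point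
of `[0,1)` vanishes identically on `[0,1]`. -/
theorem one_dim_strong_maximum_principle
    (K K₀ : ℝ) (hK : 0 ≤ K) (hK₀ : 0 ≤ K₀) (f : ℝ → ℝ)
    (hfc : ContinuousOn f (Icc 0 1))
    (hle : ∀ t ∈ Icc (0:ℝ) 1, f t ≤ 0)
    (N : Set ℝ)
    (hNopen : ∃ O : Set ℝ, IsOpen O ∧ N = O ∩ Icc 0 1)
    (hNzero : {t ∈ Icc (0:ℝ) 1 | f t = 0} ⊆ N)
    (hdiff : ∀ t ∈ N, DifferentiableWithinAt ℝ f (Icc 0 1) t ∧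
      DifferentiableWithinAt ℝ (derivWithin f (Icc 0 1)) (Icc 0 1) t)
    (hineq : ∀ t ∈ N,
      -K * |derivWithin f (Icc 0 1) t| - K₀ * |f t| ≤
        derivWithin (derivWithin f (Icc 0 1)) (Icc 0 1) t)
    (that : ℝ) (hthat : that ∈ Ico (0:ℝ) 1)
    (hf0 : f that = 0) (hf'0 : derivWithin f (Icc 0 1) that = 0) :
    ∀ t ∈ Icc (0:ℝ) 1, f t = 0 := by
  obtain ⟨O, hO, hNO⟩ := hNopen
  set C : Set ℝ := Icc 0 1 ∩ f ⁻¹' {0} with hCdef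
  have hCclosed : IsClosed C :=
    hfc.preimage_isClosed_of_isClosed isClosed_Icc isClosed_singleton
  have hderiv0 : ∀ x : ℝ, 0 < x → x < 1 → f x = 0 → derivWithin f (Icc 0 1) x = 0 := by
    intro x hx0 hx1 hfx
    have hmem : Icc (0:ℝ) 1 ∈ nhds x := Icc_mem_nhds hx0 hx1
    have hxN : x ∈ N := hNzero ⟨⟨hx0.le, hx1.le⟩, hfx⟩
    have hmax : IsLocalMax f x := by
      filter_upwards [hmem] with s hs
      rw [hfx]; exact hle s hs
    rw [derivWithin_of_mem_nhds hmem]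
    exact hmax.deriv_eq_zero
  have hball : ∀ x : ℝ, x ∈ Icc (0:ℝ) 1 → f x = 0 →
      ∃ r > 0, ∀ t : ℝ, |t - x| ≤ r → t ∈ Icc (0:ℝ) 1 → t ∈ N := by
    intro x hx hfx
    have hxN : x ∈ N := hNzero ⟨hx, hfx⟩
    rw [hNO] at hxN
    obtain ⟨r', hr', hball'⟩ := Metric.isOpen_iff.1 hO x hxN.1
    refine ⟨r' / 2, by linarith, fun t hdist ht01 => ?_⟩
    rw [hNO]
    refine ⟨hball' ?_, ht01⟩
    rw [Metric.mem_ball, Real.dist_eq]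
    linarith [hdist]
  -- right propagation
  set S : Set ℝ := {t | t ∈ Icc that 1 ∧ ∀ s ∈ Icc that t, f s = 0} with hSdef
  have hSne : that ∈ S := by
    refine ⟨⟨le_rfl, hthat.2.le⟩, fun s hs => ?_⟩
    have : s = that := le_antisymm hs.2 hs.1
    rw [this]; exact hf0
  have hSbdd : BddAbove S := ⟨1, fun t ht => ht.1.2⟩
  set b₀ : ℝ := sSup S with hb₀def
  have hb₀1 : b₀ ≤ 1 := csSup_le ⟨that, hSne⟩ fun t ht => ht.1.2
  have hb₀t : that ≤ b₀ := le_csSup hSbdd hSne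
  have hb₀0 : 0 ≤ b₀ := le_trans hthat.1 hb₀t
  have hIco : ∀ s ∈ Ico that b₀, f s = 0 := by
    intro s hs
    obtain ⟨u, huS, hu⟩ := exists_lt_of_lt_csSup ⟨that, hSne⟩ hs.2
    exact huS.2 s ⟨hs.1, hu.le⟩
  have hfb₀ : f b₀ = 0 := by
    rcases eq_or_lt_of_le hb₀t with h | h
    · rw [← h]; exact hf0
    · have hsubC : Ico that b₀ ⊆ C := fun s hs =>
        ⟨⟨le_trans hthat.1 hs.1, le_trans hs.2.le hb₀1⟩, hIco s hs⟩
      have hcl : b₀ ∈ closure (Ico that b₀) := by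
        rw [closure_Ico h.ne]; exact ⟨hb₀t, le_rfl⟩
      exact (closure_minimal hsubC hCclosed hcl).2
  have hzero_right : ∀ s ∈ Icc that b₀, f s = 0 := by
    intro s hs
    rcases eq_or_lt_of_le hs.2 with h | h
    · rw [h]; exact hfb₀
    · exact hIco s ⟨hs.1, h⟩
  have hb₀eq1 : b₀ = 1 := by
    by_contra hb
    have hb₀lt1 : b₀ < 1 := lt_of_le_of_ne hb₀1 hb
    have hD0 : derivWithin f (Icc 0 1) b₀ = 0 := by
      rcases eq_or_lt_of_le hb₀t with h | h
      · rw [← h]; exact hf'0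
      · exact hderiv0 b₀ (lt_of_le_of_lt hthat.1 h) hb₀lt1 hfb₀
    obtain ⟨r, hr, hrN⟩ := hball b₀ ⟨hb₀0, hb₀1⟩ hfb₀
    set δ : ℝ := min r ((1 - b₀) / 2) with hδdef
    have hδr : δ ≤ r := min_le_left _ _
    have hδb : δ ≤ (1 - b₀) / 2 := min_le_right _ _
    have hδ : 0 < δ := lt_min hr (by linarith)
    have hsub1 : Icc b₀ (b₀ + δ) ⊆ Icc (0:ℝ) 1 := by
      intro t ht
      exact ⟨le_trans hb₀0 ht.1, by linarith [ht.2]⟩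
    have hsubN : Icc b₀ (b₀ + δ) ⊆ N := by
      intro t ht
      refine hrN t ?_ (hsub1 ht)
      rw [abs_le]
      constructor <;> linarith [ht.1, ht.2]
    have hzero := core_smp K K₀ hK hK₀ f b₀ (b₀ + δ) b₀ (by linarith)
      ⟨le_rfl, by linarith⟩ hsub1 hfc hle
      (fun t ht => (hdiff t (hsubN ht)).1) (fun t ht => (hdiff t (hsubN ht)).2)
      (fun t ht => hineq t (hsubN ht)) hfb₀ hD0
    have hmem : b₀ + δ ∈ S := by
      refine ⟨⟨by linarith, by linarith⟩, fun s hs => ?_⟩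
      rcases le_total s b₀ with h | h
      · exact hzero_right s ⟨hs.1, h⟩
      · exact hzero s ⟨h, hs.2⟩
    have := le_csSup hSbdd hmem
    linarith
  -- left propagation
  set S' : Set ℝ := {t | t ∈ Icc 0 that ∧ ∀ s ∈ Icc t that, f s = 0} with hS'def
  have hS'ne : that ∈ S' := by
    refine ⟨⟨hthat.1, le_rfl⟩, fun s hs => ?_⟩
    have : s = that := le_antisymm hs.2 hs.1
    rw [this]; exact hf0
  have hS'bdd : BddBelow S' := ⟨0, fun t ht => ht.1.1⟩
  set a₀ : ℝ := sInf S' with ha₀def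
  have ha₀0 : 0 ≤ a₀ := le_csInf ⟨that, hS'ne⟩ fun t ht => ht.1.1
  have ha₀t : a₀ ≤ that := csInf_le hS'bdd hS'ne
  have ha₀1 : a₀ < 1 := lt_of_le_of_lt ha₀t hthat.2
  have hIoc : ∀ s ∈ Ioc a₀ that, f s = 0 := by
    intro s hs
    obtain ⟨u, huS, hu⟩ := exists_lt_of_csInf_lt ⟨that, hS'ne⟩ hs.1
    exact huS.2 s ⟨hu.le, hs.2⟩
  have hfa₀ : f a₀ = 0 := by
    rcases eq_or_lt_of_le ha₀t with h | h
    · rw [h]; exact hf0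
    · have hsubC : Ioc a₀ that ⊆ C := fun s hs =>
        ⟨⟨le_trans ha₀0 hs.1.le, le_trans hs.2 hthat.2.le⟩, hIoc s hs⟩
      have hcl : a₀ ∈ closure (Ioc a₀ that) := by
        rw [closure_Ioc h.ne]; exact ⟨le_rfl, ha₀t⟩
      exact (closure_minimal hsubC hCclosed hcl).2
  have hzero_left : ∀ s ∈ Icc a₀ that, f s = 0 := by
    intro s hs
    rcases eq_or_lt_of_le hs.1 with h | h
    · rw [← h]; exact hfa₀
    · exact hIoc s ⟨h, hs.2⟩
  have ha₀eq0 : a₀ = 0 := by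
    by_contra ha
    have ha₀pos : 0 < a₀ := lt_of_le_of_ne ha₀0 (Ne.symm ha)
    have hD0 : derivWithin f (Icc 0 1) a₀ = 0 := by
      rcases eq_or_lt_of_le ha₀t with h | h
      · rw [h]; exact hf'0
      · exact hderiv0 a₀ ha₀pos ha₀1 hfa₀
    obtain ⟨r, hr, hrN⟩ := hball a₀ ⟨ha₀0, ha₀1.le⟩ hfa₀
    set δ : ℝ := min r (a₀ / 2) with hδdef
    have hδr : δ ≤ r := min_le_left _ _
    have hδa : δ ≤ a₀ / 2 := min_le_right _ _
    have hδ : 0 < δ := lt_min hr (by linarith)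
    have hsub1 : Icc (a₀ - δ) a₀ ⊆ Icc (0:ℝ) 1 := by
      intro t ht
      exact ⟨by linarith [ht.1], le_trans ht.2 ha₀1.le⟩
    have hsubN : Icc (a₀ - δ) a₀ ⊆ N := by
      intro t ht
      refine hrN t ?_ (hsub1 ht)
      rw [abs_le]
      constructor <;> linarith [ht.1, ht.2]
    have hzero := core_smp K K₀ hK hK₀ f (a₀ - δ) a₀ a₀ (by linarith)
      ⟨by linarith, le_rfl⟩ hsub1 hfc hle
      (fun t ht => (hdiff t (hsubN ht)).1) (fun t ht => (hdiff t (hsubN ht)).2)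
      (fun t ht => hineq t (hsubN ht)) hfa₀ hD0
    have hmem : a₀ - δ ∈ S' := by
      refine ⟨⟨by linarith, by linarith⟩, fun s hs => ?_⟩
      rcases le_total s a₀ with h | h
      · exact hzero s ⟨hs.1, h⟩
      · exact hzero_left s ⟨h, hs.2⟩
    have := csInf_le hS'bdd hmem
    linarith
  intro t ht
  rcases le_total t that with h | h
  · exact hzero_left t ⟨ha₀eq0 ▸ ht.1, h⟩
  · exact hzero_right t ⟨h, hb₀eq1 ▸ ht.2⟩
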